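/- For every integer m ≥ 4, real numbers 0 < v_1 < v_2 < ⋯ < v_m, and nonnegative real numbers A_1, …, A_m, the inequality Δ_{m−2} ≤ c_m* · v_{m−2} · A_{m−2} + c_m* · v_{m−1} · A_{m−1} + c_m* · v_m · A_m holds. -/

import Mathlib

/-- `csum v i = ∑_{j=1}^{i-1} 2^{j-1} v_{i-j}` (empty sum is 0). -/
noncomputable def csum (v : ℕ → ℝ) (i : ℕ) : ℝ :=
  ∑ j ∈ Finset.Icc 1 (i - 1), (2 : ℝ) ^ (j - 1) * v (i - j)

/-- `cval v i = c_i = (v_i + csum v i) / (v_{i+1} + csum v i)`. -/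
noncomputable def cval (v : ℕ → ℝ) (i : ℕ) : ℝ :=
  (v i + csum v i) / (v (i + 1) + csum v i)

/-- `cstar v m = c_m^* = max_{1 ≤ i ≤ m-1} c_i`. -/
noncomputable def cstar (v : ℕ → ℝ) (m : ℕ) : ℝ :=
  if hne : (Finset.Icc 1 (m - 1)).Nonempty then (Finset.Icc 1 (m - 1)).sup' hne (cval v)
  else 0

/-- `Sfun A m h = S_h = ∑_{ℓ=h}^{m} A_ℓ`. -/
noncomputable def Sfun (A : ℕ → ℝ) (m h : ℕ) : ℝ := ∑ ℓ ∈ Finset.Icc h m, A ℓ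

/-- `Urec A m h = U_h`, defined by `U_{m-1} = A_m` and
`U_h = min (A_h) (U_{h+1}) + S_{h+1}` for `h ≤ m-2`. -/
noncomputable def Urec (A : ℕ → ℝ) (m h : ℕ) : ℝ :=
  if hle : m - 1 ≤ h then A m
  else min (A h) (Urec A m (h + 1)) + Sfun A m (h + 1)
termination_by m - 1 - h
decreasing_by omega

/-- `Delta v A m h = Δ_h`,
`Δ_h = [(v_h + ∑_{j=1}^{h-2} 2^{j-1} v_{h-1-j}) - c_m^* (v_{h-1} + ∑_{j=1}^{h-2} 2^{j-1} v_{h-1-j})] U_h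
     + [(v_{h-1} + ∑_{j=1}^{h-2} 2^{j-1} v_{h-1-j}) - c_m^* ∑_{j=1}^{h-2} 2^{j-1} v_{h-1-j}] S_h
     + ∑_{ℓ=h+1}^{m-1} (v_ℓ - v_{ℓ-1}) U_ℓ`, where `∑_{j=1}^{h-2} 2^{j-1} v_{h-1-j} = csum v (h-1)`. -/
noncomputable def Delta (v A : ℕ → ℝ) (m h : ℕ) : ℝ :=
  ((v h + csum v (h - 1)) - cstar v m * (v (h - 1) + csum v (h - 1))) * Urec A m h +
  ((v (h - 1) + csum v (h - 1)) - cstar v m * csum v (h - 1)) * Sfun A m h +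
  ∑ ℓ ∈ Finset.Icc (h + 1) (m - 1), (v ℓ - v (ℓ - 1)) * Urec A m ℓ



lemma csum_succ' (v : ℕ → ℝ) (i : ℕ) (hi : 1 ≤ i) :
    csum v (i + 1) = v i + 2 * csum v i := by
  unfold csum
  rw [show i + 1 - 1 = i from rfl]
  have h1 : Finset.Icc 1 i = insert 1 (Finset.Icc 2 i) := by
    ext j; simp [Finset.mem_Icc]; omega
  rw [h1, Finset.sum_insert (by simp)]
  have h2 : Finset.Icc 2 i = (Finset.Icc 1 (i - 1)).map (addRightEmbedding 1) := by
    rw [Finset.map_add_right_Icc]; congr 1; omega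
  rw [h2, Finset.sum_map, Finset.mul_sum]
  simp only [addRightEmbedding_apply]
  congr 1
  · norm_num
  refine Finset.sum_congr rfl fun j hj => ?_
  simp only [Finset.mem_Icc] at hj
  rw [show i + 1 - (j + 1) = i - j from by omega,
    show j + 1 - 1 = (j - 1) + 1 from by omega, pow_succ]
  ring

/-- Lemma 4.4: for every `m ≥ 4`, reals `0 < v 1 < ⋯ < v m` with `v 0 = 0`, and
nonnegative reals `A_1, …, A_m`,
`Δ_{m-2} ≤ c_m^* v_{m-2} A_{m-2} + c_m^* v_{m-1} A_{m-1} + c_m^* v_m A_m`. -/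
theorem stmt4 (m : ℕ) (hm : 4 ≤ m) (v : ℕ → ℝ) (hv0 : v 0 = 0)
    (hv1 : 0 < v 1) (hv : ∀ i, 1 ≤ i → i < m → v i < v (i + 1))
    (A : ℕ → ℝ) (hA : ∀ i ∈ Finset.Icc 1 m, 0 ≤ A i) :
    Delta v A m (m - 2) ≤
      cstar v m * v (m - 2) * A (m - 2) + cstar v m * v (m - 1) * A (m - 1) +
        cstar v m * v m * A m := by
  obtain ⟨n, rfl⟩ : ∃ n, m = n + 4 := ⟨m - 4, by omega⟩
  have hvpos : ∀ k, 1 ≤ k → k ≤ n + 4 → 0 < v k := by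
    intro k
    induction k with
    | zero => omega
    | succ k ih =>
      intro _ hk2
      rcases Nat.eq_zero_or_pos k with hk | hk
      · subst hk; exact hv1
      · exact lt_trans (ih hk (by omega)) (hv k hk (by omega))
  have hvnn : ∀ k, k ≤ n + 4 → 0 ≤ v k := by
    intro k hk; rcases Nat.eq_zero_or_pos k with h | h
    · subst h; simp [hv0]
    · exact le_of_lt (hvpos k h hk)
  have hcsum_nn : ∀ i, i ≤ n + 4 → 0 ≤ csum v i := by
    intro i hi
    apply Finset.sum_nonneg
    intro j hj
    simp only [Finset.mem_Icc] at hj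
    exact mul_nonneg (by positivity) (hvnn _ (by omega))
  have hne : (Finset.Icc 1 (n + 4 - 1)).Nonempty := by
    rw [Finset.nonempty_Icc]; omega
  have hcstar : cstar v (n + 4) = (Finset.Icc 1 (n + 4 - 1)).sup' hne (cval v) := by
    rw [cstar, dif_pos hne]
  have hD : ∀ i, 1 ≤ i → i ≤ n + 3 → 0 < v (i + 1) + csum v i := by
    intro i hi1 hi2
    exact add_pos_of_pos_of_nonneg (hvpos _ (by omega) (by omega)) (hcsum_nn i (by omega))
  have hkey : ∀ i, 1 ≤ i → i ≤ n + 3 →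
      v i + csum v i ≤ cstar v (n + 4) * (v (i + 1) + csum v i) := by
    intro i hi1 hi2
    have hle : cval v i ≤ cstar v (n + 4) := by
      rw [hcstar]; exact Finset.le_sup' _ (by simp only [Finset.mem_Icc]; omega)
    rw [cval, div_le_iff₀ (hD i hi1 hi2)] at hle
    linarith
  have hc1 : cstar v (n + 4) ≤ 1 := by
    rw [hcstar]
    apply Finset.sup'_le
    intro i hi
    simp only [Finset.mem_Icc] at hi
    rw [cval, div_le_one (hD i hi.1 hi.2)]
    have : v i < v (i + 1) := hv i hi.1 (by omega)
    linarith
  set c := cstar v (n + 4) with hc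
  -- unfold Delta and Urec/Sfun values
  have hU3 : Urec A (n + 4) (n + 3) = A (n + 4) := by
    rw [Urec]; simp
  have hS3 : Sfun A (n + 4) (n + 3) = A (n + 3) + A (n + 4) := by
    rw [Sfun, show n + 4 = (n + 3) + 1 from rfl, Finset.sum_Icc_succ_top (by omega),
      Finset.Icc_self, Finset.sum_singleton]
  have hS2 : Sfun A (n + 4) (n + 2) = A (n + 2) + (A (n + 3) + A (n + 4)) := by
    rw [Sfun, show n + 4 = (n + 2) + 1 + 1 from rfl, Finset.sum_Icc_succ_top (by omega),
      Finset.sum_Icc_succ_top (by omega), Finset.Icc_self, Finset.sum_singleton]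
    ring
  have hU2 : Urec A (n + 4) (n + 2) =
      min (A (n + 2)) (A (n + 4)) + (A (n + 3) + A (n + 4)) := by
    rw [Urec, dif_neg (by omega), show n + 2 + 1 = n + 3 from rfl, hU3, hS3]
  have hgoal : Delta v A (n + 4) (n + 4 - 2) =
      ((v (n + 2) + csum v (n + 1)) - c * (v (n + 1) + csum v (n + 1))) *
        (min (A (n + 2)) (A (n + 4)) + (A (n + 3) + A (n + 4))) +
      ((v (n + 1) + csum v (n + 1)) - c * csum v (n + 1)) *
        (A (n + 2) + (A (n + 3) + A (n + 4))) +
      (v (n + 3) - v (n + 2)) * A (n + 4) := by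
    rw [show n + 4 - 2 = n + 2 from rfl, Delta, show n + 2 - 1 = n + 1 from rfl,
      show n + 2 + 1 = n + 3 from rfl, show n + 4 - 1 = n + 3 from rfl,
      Finset.Icc_self, Finset.sum_singleton, show n + 3 - 1 = n + 2 from rfl,
      hU2, hS2, hU3, ← hc]
  rw [show n + 4 - 2 = n + 2 from rfl, show n + 4 - 1 = n + 3 from rfl] at *
  rw [hgoal]
  have hK2 : csum v (n + 2) = v (n + 1) + 2 * csum v (n + 1) := csum_succ' v (n + 1) (by omega)
  have hK3 : csum v (n + 3) = v (n + 2) + 2 * csum v (n + 2) := csum_succ' v (n + 2) (by omega)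
  have I1 := hkey (n + 1) (by omega) (by omega)
  have I2 := hkey (n + 2) (by omega) (by omega)
  have I3 := hkey (n + 3) (by omega) (by omega)
  rw [hK2] at I2
  rw [hK3, hK2] at I3
  norm_num at I1 I2 I3
  have hA2 : 0 ≤ A (n + 2) := hA _ (by simp only [Finset.mem_Icc]; omega)
  have hA3 : 0 ≤ A (n + 3) := hA _ (by simp only [Finset.mem_Icc]; omega)
  have hA4 : 0 ≤ A (n + 4) := hA _ (by simp only [Finset.mem_Icc]; omega)
  have hK1nn : 0 ≤ csum v (n + 1) := hcsum_nn _ (by omega)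
  have hv2nn : 0 ≤ v (n + 2) := hvnn _ (by omega)
  have hv1nn : 0 ≤ v (n + 1) := hvnn _ (by omega)
  have p1 := mul_le_mul_of_nonneg_right I2 hA3
  have p2 := mul_le_mul_of_nonneg_right I3 hA4
  rcases le_total (A (n + 2)) (A (n + 4)) with hmin | hmin
  · rw [min_eq_left hmin]
    have hEnn : 0 ≤ (1 - c) * (v (n + 2) + v (n + 1) + 2 * csum v (n + 1)) := by
      apply mul_nonneg <;> linarith
    have p3 := mul_le_mul_of_nonneg_left hmin hEnn
    linarith [p1, p2, p3]
  · rw [min_eq_right hmin]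
    have hEnn : 0 ≤ c * (v (n + 2) + csum v (n + 1)) - (v (n + 1) + csum v (n + 1)) := by
      linarith
    have p3 := mul_le_mul_of_nonneg_left hmin hEnn
    linarith [p1, p2, p3]
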